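/- Let g be a nonnegative function on the Hamming cube Ω₂ⁿ. Then 𝔼[g²(log g² − log 𝔼g²)] ≤ 2·‖g‖²_{L²logL}. -/
import Mathlib


/-- The Hamming cube `Ω₂ⁿ = {-1,1}ⁿ`, encoded as `Fin n → Bool`. -/
abbrev Cube (n : ℕ) : Type := Fin n → Bool

/-- The sign `±1` associated to a Boolean coordinate. -/
def sgn (b : Bool) : ℝ := if b then 1 else -1

/-- Expectation with respect to the uniform probability measure on the Hamming cube. -/
noncomputable def expect {n : ℕ} (f : Cube n → ℝ) : ℝ :=
  (∑ x : Cube n, f x) / 2 ^ n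

/-- The `i`-th discrete derivative `D_i f(x) = (f(x) - f(σ_i x))/2`, where `σ_i`
flips the `i`-th coordinate. -/
noncomputable def Di {n : ℕ} {E : Type*} [AddCommGroup E] [Module ℝ E]
    (f : Cube n → E) (i : Fin n) (x : Cube n) : E :=
  ((2 : ℝ)⁻¹) • (f x - f (Function.update x i (!x i)))

/-- `ψ₂(t) = t²·log(e + t²)`, the Young function of the Orlicz space `L² log L`. -/
noncomputable def psi2 (t : ℝ) : ℝ := t ^ 2 * Real.log (Real.exp 1 + t ^ 2)

/-- The Orlicz norm `‖g‖_{L² log L} = inf {λ > 0 : 𝔼 ψ₂(g/λ) ≤ 1}`. -/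
noncomputable def orliczNorm {n : ℕ} (g : Cube n → ℝ) : ℝ :=
  sInf {lam : ℝ | 0 < lam ∧ expect (fun x => psi2 (g x / lam)) ≤ 1}

/- ### Auxiliary lemmas -/

lemma expect_mono' {n : ℕ} {f h : Cube n → ℝ} (hfh : ∀ x, f x ≤ h x) :
    expect f ≤ expect h := by
  unfold expect
  gcongr with x
  exact hfh x

lemma expect_const' {n : ℕ} (c : ℝ) : expect (fun _ : Cube n => c) = c := by
  simp [expect, Finset.sum_const, Fintype.card_fun]

lemma expect_const_mul' {n : ℕ} (c : ℝ) (f : Cube n → ℝ) :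
    expect (fun x => c * f x) = c * expect f := by
  simp [expect, ← Finset.mul_sum, mul_div_assoc]

lemma expect_mul_const' {n : ℕ} (c : ℝ) (f : Cube n → ℝ) :
    expect (fun x => f x * c) = expect f * c := by
  simp [expect, ← Finset.sum_mul, div_mul_eq_mul_div]

lemma expect_sub' {n : ℕ} (f h : Cube n → ℝ) :
    expect (fun x => f x - h x) = expect f - expect h := by
  simp [expect, Finset.sum_sub_distrib, sub_div]

lemma psi2_mono' {s t : ℝ} (hs : 0 ≤ s) (hst : s ≤ t) : psi2 s ≤ psi2 t := by
  have h1 : s ^ 2 ≤ t ^ 2 := by nlinarith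
  have h2 : Real.log (Real.exp 1 + s ^ 2) ≤ Real.log (Real.exp 1 + t ^ 2) :=
    Real.log_le_log (by positivity) (by linarith)
  have h3 : (0:ℝ) ≤ Real.log (Real.exp 1 + s ^ 2) := by
    have : (1:ℝ) ≤ Real.exp 1 + s ^ 2 := by nlinarith [Real.add_one_le_exp (1:ℝ)]
    exact Real.log_nonneg this
  exact mul_le_mul h1 h2 h3 (by positivity)

/-- `log(e + t²) ≥ 1`, hence `t² ≤ ψ₂(t)`. -/
lemma sq_le_psi2 (t : ℝ) : t ^ 2 ≤ psi2 t := by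
  have h1 : (1:ℝ) ≤ Real.log (Real.exp 1 + t ^ 2) := by
    have := Real.log_le_log (Real.exp_pos 1)
      (le_add_of_nonneg_right (sq_nonneg t) : Real.exp 1 ≤ Real.exp 1 + t ^ 2)
    simpa using this
  calc t ^ 2 = t ^ 2 * 1 := by ring
  _ ≤ psi2 t := by
      unfold psi2
      exact mul_le_mul_of_nonneg_left h1 (by positivity)

/-- `t² log t² ≤ ψ₂(t)`. -/
lemma sq_log_sq_le_psi2 (t : ℝ) : t ^ 2 * Real.log (t ^ 2) ≤ psi2 t := by
  rcases eq_or_ne t 0 with rfl | ht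
  · simp [psi2]
  · have h2 : (0:ℝ) < t ^ 2 := by positivity
    exact mul_le_mul_of_nonneg_left
      (Real.log_le_log h2 (by nlinarith [Real.exp_pos 1])) (by positivity)

/-- Key lemma: the entropy bound for any admissible `μ`. -/
lemma ent_le_of_admissible {n : ℕ} (g : Cube n → ℝ) (hg : ∀ x, 0 ≤ g x) {μ : ℝ}
    (hμ : 0 < μ) (hadm : expect (fun x => psi2 (g x / μ)) ≤ 1) :
    expect (fun x => g x ^ 2 *
        (Real.log (g x ^ 2) - Real.log (expect (fun y => g y ^ 2)))) ≤ 2 * μ ^ 2 := by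
  by_cases hzero : ∀ x, g x = 0
  · have : (fun x : Cube n => g x ^ 2 *
        (Real.log (g x ^ 2) - Real.log (expect (fun y => g y ^ 2)))) =
        fun _ : Cube n => (0:ℝ) := by
      funext x; simp [hzero x]
    rw [this, expect_const']
    positivity
  push_neg at hzero
  obtain ⟨x₀, hx₀⟩ := hzero
  have hx₀' : 0 < g x₀ := (hg x₀).lt_of_ne' hx₀
  -- E > 0
  set E := expect (fun y => g y ^ 2) with hEdef
  have hEpos : 0 < E := by
    have hsum : g x₀ ^ 2 ≤ ∑ x : Cube n, g x ^ 2 :=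
      Finset.single_le_sum (f := fun x : Cube n => g x ^ 2)
        (fun x _ => by positivity) (Finset.mem_univ x₀)
    have : 0 < ∑ x : Cube n, g x ^ 2 := lt_of_lt_of_le (by positivity) hsum
    unfold E
    unfold expect
    positivity
  set B := expect (fun y => (g y / μ) ^ 2) with hBdef
  have hEB : E = μ ^ 2 * B := by
    rw [hEdef, hBdef, ← expect_const_mul']
    congr 1
    funext y
    field_simp
  have hBpos : 0 < B := by
    have : B = E / μ ^ 2 := by rw [hEB]; field_simp
    rw [this]; positivity
  -- pointwise identity
  have key : ∀ x, g x ^ 2 * (Real.log (g x ^ 2) - Real.log E)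
      = μ ^ 2 * ((g x / μ) ^ 2 * Real.log ((g x / μ) ^ 2)
          - (g x / μ) ^ 2 * Real.log B) := by
    intro x
    rcases (hg x).eq_or_lt with h0 | hpos
    · simp [← h0, hμ.ne']
    · have hhx : 0 < g x / μ := div_pos hpos hμ
      have hgx2 : g x ^ 2 = μ ^ 2 * (g x / μ) ^ 2 := by field_simp
      rw [hgx2, Real.log_mul (by positivity) (by positivity), hEB,
        Real.log_mul (by positivity) hBpos.ne']
      ring
  calc expect (fun x => g x ^ 2 * (Real.log (g x ^ 2) - Real.log E))
      = μ ^ 2 * expect (fun x => (g x / μ) ^ 2 * Real.log ((g x / μ) ^ 2)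
          - (g x / μ) ^ 2 * Real.log B) := by
        rw [← expect_const_mul']
        congr 1; funext x; exact key x
    _ ≤ 2 * μ ^ 2 := by
        rw [expect_sub']
        have hA : expect (fun x => (g x / μ) ^ 2 * Real.log ((g x / μ) ^ 2)) ≤ 1 :=
          le_trans (expect_mono' fun x => sq_log_sq_le_psi2 _) hadm
        have hBlog : expect (fun x => (g x / μ) ^ 2 * Real.log B)
            = B * Real.log B := by
          rw [expect_mul_const', ← hBdef]
        rw [hBlog]
        have hB1 : B ≤ 1 := by
          rw [hBdef]
          exact le_trans (expect_mono' fun x => sq_le_psi2 _) hadm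
        have hlog : Real.log B⁻¹ ≤ B⁻¹ - 1 :=
          Real.log_le_sub_one_of_pos (by positivity)
        rw [Real.log_inv] at hlog
        have hBinv : B * B⁻¹ = 1 := mul_inv_cancel₀ hBpos.ne'
        nlinarith [hBpos]

theorem entropy_le_orlicz {n : ℕ} (g : Cube n → ℝ) (hg : ∀ x, 0 ≤ g x) :
    expect (fun x => g x ^ 2 *
        (Real.log (g x ^ 2) - Real.log (expect (fun y => g y ^ 2)))) ≤
      2 * orliczNorm g ^ 2 := by
  set S : Set ℝ := {lam : ℝ | 0 < lam ∧ expect (fun x => psi2 (g x / lam)) ≤ 1} with hS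
  -- S is nonempty
  have hne : S.Nonempty := by
    set M := ∑ x : Cube n, g x with hM
    have hMnn : 0 ≤ M := Finset.sum_nonneg fun x _ => hg x
    refine ⟨2 * M + 2, by linarith, ?_⟩
    have hpt : ∀ x, psi2 (g x / (2 * M + 2)) ≤ 1 := by
      intro x
      have hle : g x ≤ M := Finset.single_le_sum (fun x _ => hg x) (Finset.mem_univ x)
      set t := g x / (2 * M + 2) with ht
      have ht0 : 0 ≤ t := div_nonneg (hg x) (by linarith)
      have ht2 : t ≤ 1 / 2 := by
        rw [ht, div_le_div_iff₀ (by linarith) (by norm_num)]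
        linarith
      have hlog : Real.log (Real.exp 1 + t ^ 2) ≤ Real.exp 1 + t ^ 2 - 1 :=
        Real.log_le_sub_one_of_pos (by positivity)
      have he : Real.exp 1 < 2.7182818286 := Real.exp_one_lt_d9
      have ht4 : t ^ 2 ≤ 1 / 4 := by nlinarith
      have hlog2 : Real.log (Real.exp 1 + t ^ 2) ≤ 2 := by nlinarith
      have hlognn : (0:ℝ) ≤ Real.log (Real.exp 1 + t ^ 2) :=
        Real.log_nonneg (by nlinarith [Real.add_one_le_exp (1:ℝ)])
      unfold psi2
      calc t ^ 2 * Real.log (Real.exp 1 + t ^ 2) ≤ (1 / 4) * 2 :=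
            mul_le_mul ht4 hlog2 hlognn (by norm_num)
        _ ≤ 1 := by norm_num
    calc expect (fun x => psi2 (g x / (2 * M + 2))) ≤ expect (fun _ : Cube n => (1:ℝ)) :=
          expect_mono' hpt
      _ = 1 := expect_const' 1
  have hbdd : BddBelow S := ⟨0, fun l hl => hl.1.le⟩
  have hL0 : 0 ≤ orliczNorm g := le_csInf hne fun l hl => hl.1.le
  -- every μ > orliczNorm g is admissible
  have hadm : ∀ μ, orliczNorm g < μ → expect (fun x => g x ^ 2 *
      (Real.log (g x ^ 2) - Real.log (expect (fun y => g y ^ 2)))) ≤ 2 * μ ^ 2 := by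
    intro μ hμ
    obtain ⟨l, hlS, hll⟩ := exists_lt_of_csInf_lt hne hμ
    have hμpos : 0 < μ := lt_of_lt_of_le hlS.1 hll.le
    refine ent_le_of_admissible g hg hμpos (le_trans (expect_mono' fun x => ?_) hlS.2)
    exact psi2_mono' (div_nonneg (hg x) hμpos.le)
      (div_le_div_of_nonneg_left (hg x) hlS.1 hll.le)
  -- take the limit μ → orliczNorm g
  have htend : Filter.Tendsto (fun μ : ℝ => 2 * μ ^ 2)
      (nhdsWithin (orliczNorm g) (Set.Ioi (orliczNorm g)))
      (nhds (2 * orliczNorm g ^ 2)) := by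
    exact ((continuous_const.mul (continuous_pow 2)).tendsto _).mono_left
      nhdsWithin_le_nhds
  refine ge_of_tendsto htend ?_
  filter_upwards [self_mem_nhdsWithin] with μ hμ
  exact hadm μ hμ
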